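/- Let G and H be finite graphs that are not 3-colorable, let e be an edge of G and f an edge of H, let N be a gadget, and let W = (G,e) ⊕ (H,f) be the glued graph. Then W is not 3-colorable. -/

import Mathlib

/-- A gadget: a finite graph `N` with four distinguished pairwise distinct vertices
`x, x', y, y'` (with `(x,x')` and `(y,y')` non-edges) and a distinguished edge
`(d₁, d₂)`, satisfying the three extension properties with respect to 3-colorings. -/
structure Gadget {VN : Type*} (N : SimpleGraph VN) where
  x : VN
  x' : VN
  y : VN
  y' : VN
  d₁ : VN
  d₂ : VN
  hxx' : x ≠ x'
  hxy : x ≠ y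
  hxy' : x ≠ y'
  hx'y : x' ≠ y
  hx'y' : x' ≠ y'
  hyy' : y ≠ y'
  nonedge_x : ¬ N.Adj x x'
  nonedge_y : ¬ N.Adj y y'
  hd : N.Adj d₁ d₂
  prop_i : ∀ c : N →g (⊤ : SimpleGraph (Fin 3)), Xor' (c x ≠ c x') (c y ≠ c y')
  prop_ii : ∀ c : VN → Fin 3, Xor' (c x ≠ c x') (c y ≠ c y') →
    ∃ c' : N →g (⊤ : SimpleGraph (Fin 3)),
      c' x = c x ∧ c' x' = c x' ∧ c' y = c y ∧ c' y' = c y'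
  prop_iii : ∀ c : VN → Fin 3, c x = c x' → c y = c y' →
    ∃ c' : N.deleteEdges {s(d₁, d₂)} →g (⊤ : SimpleGraph (Fin 3)),
      c' x = c x ∧ c' x' = c x' ∧ c' y = c y ∧ c' y' = c y'

/-- The vertex set of the glued graph `(G,e) ⊕ (H,f)`: the vertices of `G`, the
vertices of `H`, and the vertices of `N` other than `x, x', y, y'` (which are
identified with the endpoints of `e` and `f`). -/
def GlueV (VG VH : Type*) {VN : Type*} {N : SimpleGraph VN} (gd : Gadget N) : Type _ :=
  VG ⊕ (VH ⊕ {m : VN // m ≠ gd.x ∧ m ≠ gd.x' ∧ m ≠ gd.y ∧ m ≠ gd.y'})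

/-- The canonical map from the vertices of `N` into the glued graph, identifying
`x` with `x₀`, `x'` with `x₀'`, `y` with `y₀` and `y'` with `y₀'`. -/
def glueMap {VG VH VN : Type*} [DecidableEq VN] {N : SimpleGraph VN} (gd : Gadget N)
    (x₀ x₀' : VG) (y₀ y₀' : VH) (m : VN) : GlueV VG VH gd :=
  if h1 : m = gd.x then Sum.inl x₀
  else if h2 : m = gd.x' then Sum.inl x₀'
  else if h3 : m = gd.y then Sum.inr (Sum.inl y₀)
  else if h4 : m = gd.y' then Sum.inr (Sum.inl y₀')
  else Sum.inr (Sum.inr ⟨m, h1, h2, h3, h4⟩)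

/-- The glued graph `W = (G, e) ⊕ (H, f)` where `e = (x₀, x₀')` and `f = (y₀, y₀')`:
its edges are those of `G − e`, those of `H − f`, and those of `N` (transported
along `glueMap`). -/
def glued {VG VH VN : Type*} [DecidableEq VN] (G : SimpleGraph VG) (H : SimpleGraph VH)
    {N : SimpleGraph VN} (gd : Gadget N) (x₀ x₀' : VG) (y₀ y₀' : VH) :
    SimpleGraph (GlueV VG VH gd) :=
  SimpleGraph.fromRel (fun a b =>
    (∃ u v : VG, a = Sum.inl u ∧ b = Sum.inl v ∧ (G.deleteEdges {s(x₀, x₀')}).Adj u v) ∨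
    (∃ u v : VH, a = Sum.inr (Sum.inl u) ∧ b = Sum.inr (Sum.inl v) ∧
      (H.deleteEdges {s(y₀, y₀')}).Adj u v) ∨
    (∃ u v : VN, a = glueMap gd x₀ x₀' y₀ y₀' u ∧ b = glueMap gd x₀ x₀' y₀ y₀' v ∧
      N.Adj u v))

lemma glueMap_inj {VG VH VN : Type*} [DecidableEq VN] {N : SimpleGraph VN} (gd : Gadget N)
    {x₀ x₀' : VG} {y₀ y₀' : VH} (hx : x₀ ≠ x₀') (hy : y₀ ≠ y₀') :
    Function.Injective (glueMap gd x₀ x₀' y₀ y₀') := by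
  intro m m' h
  unfold glueMap at h
  split_ifs at h <;> simp_all [GlueV] <;> split_ifs at h <;> simp_all [GlueV]

theorem stmt9 {VG VH VN : Type*} [Fintype VG] [Fintype VH] [Fintype VN] [DecidableEq VN]
    (G : SimpleGraph VG) (H : SimpleGraph VH) (N : SimpleGraph VN) (gd : Gadget N)
    (hG : ¬ G.Colorable 3) (hH : ¬ H.Colorable 3)
    (x₀ x₀' : VG) (he : G.Adj x₀ x₀') (y₀ y₀' : VH) (hf : H.Adj y₀ y₀') :
    ¬ (glued G H gd x₀ x₀' y₀ y₀').Colorable 3 := by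
  rintro ⟨c⟩
  have hinj := glueMap_inj gd he.ne hf.ne
  have hadj : ∀ {u v : VN}, N.Adj u v →
      (⊤ : SimpleGraph (Fin 3)).Adj (c (glueMap gd x₀ x₀' y₀ y₀' u))
        (c (glueMap gd x₀ x₀' y₀ y₀' v)) := by
    intro u v huv
    have hW : (glued G H gd x₀ x₀' y₀ y₀').Adj (glueMap gd x₀ x₀' y₀ y₀' u)
        (glueMap gd x₀ x₀' y₀ y₀' v) := by
      rw [glued, SimpleGraph.fromRel_adj]
      exact ⟨fun hh => huv.ne (hinj hh), Or.inl (Or.inr (Or.inr ⟨u, v, rfl, rfl, huv⟩))⟩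
    exact c.valid hW
  have hmx : glueMap gd x₀ x₀' y₀ y₀' gd.x = Sum.inl x₀ := by simp [glueMap]; rfl
  have hmx' : glueMap gd x₀ x₀' y₀ y₀' gd.x' = Sum.inl x₀' := by
    simp [glueMap, gd.hxx'.symm, (Ne.symm gd.hxx' : gd.x' ≠ gd.x)]; rfl
  have hmy : glueMap gd x₀ x₀' y₀ y₀' gd.y = Sum.inr (Sum.inl y₀) := by
    simp [glueMap, (Ne.symm gd.hxy : gd.y ≠ gd.x), (Ne.symm gd.hx'y : gd.y ≠ gd.x')]; rfl
  have hmy' : glueMap gd x₀ x₀' y₀ y₀' gd.y' = Sum.inr (Sum.inl y₀') := by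
    simp [glueMap, (Ne.symm gd.hxy' : gd.y' ≠ gd.x), (Ne.symm gd.hx'y' : gd.y' ≠ gd.x'),
      (Ne.symm gd.hyy' : gd.y' ≠ gd.y)]; rfl
  have hxor : Xor' (c (glueMap gd x₀ x₀' y₀ y₀' gd.x) ≠ c (glueMap gd x₀ x₀' y₀ y₀' gd.x'))
      (c (glueMap gd x₀ x₀' y₀ y₀' gd.y) ≠ c (glueMap gd x₀ x₀' y₀ y₀' gd.y')) := gd.prop_i ⟨fun m => c (glueMap gd x₀ x₀' y₀ y₀' m), hadj⟩
  rw [hmx, hmx', hmy, hmy'] at hxor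
  have key : ∀ (hA : c (Sum.inl x₀) ≠ c (Sum.inl x₀')), False := by
    intro hA
    apply hG
    refine ⟨SimpleGraph.Coloring.mk (fun v => c (Sum.inl v)) ?_⟩
    intro u v huv
    by_cases h : s(u, v) = s(x₀, x₀')
    · rw [Sym2.eq_iff] at h
      rcases h with ⟨rfl, rfl⟩ | ⟨rfl, rfl⟩
      · exact hA
      · exact hA.symm
    · have hW : (glued G H gd x₀ x₀' y₀ y₀').Adj (Sum.inl u) (Sum.inl v) := by
        rw [glued]; refine (SimpleGraph.fromRel_adj _ _ _).2 ?_
        exact ⟨fun hh => huv.ne (Sum.inl.inj hh), Or.inl (Or.inl ⟨u, v, rfl, rfl, by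
          rw [SimpleGraph.deleteEdges_adj]; exact ⟨huv, by simpa using h⟩⟩)⟩
      exact c.valid hW
  have keyH : ∀ (hB : c (Sum.inr (Sum.inl y₀)) ≠ c (Sum.inr (Sum.inl y₀'))), False := by
    intro hB
    apply hH
    refine ⟨SimpleGraph.Coloring.mk (fun v => c (Sum.inr (Sum.inl v))) ?_⟩
    intro u v huv
    by_cases h : s(u, v) = s(y₀, y₀')
    · rw [Sym2.eq_iff] at h
      rcases h with ⟨rfl, rfl⟩ | ⟨rfl, rfl⟩
      · exact hB
      · exact hB.symm
    · have hW : (glued G H gd x₀ x₀' y₀ y₀').Adj (Sum.inr (Sum.inl u)) (Sum.inr (Sum.inl v)) := by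
        rw [glued]; refine (SimpleGraph.fromRel_adj _ _ _).2 ?_
        exact ⟨fun hh => huv.ne (Sum.inl.inj (Sum.inr.inj hh)), Or.inl (Or.inr (Or.inl ⟨u, v, rfl, rfl, by
          rw [SimpleGraph.deleteEdges_adj]; exact ⟨huv, by simpa using h⟩⟩))⟩
      exact c.valid hW
  rcases hxor with ⟨hA, _⟩ | ⟨hB, _⟩
  · exact key hA
  · exact keyH hB
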